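/- Let x = (θ1,θ2,κ0,κ1,κ∞,p1,p2,q1,q2) be a (T2,T3) Garnier lattice (so θ2(l,m) = θ2(0,0)+l and κ0(l,m) = κ0(0,0)+m for all (l,m)). Then: (a) if θ2(l,m) ≠ 0 for all (l,m), the function u(l,m) = p2(l,m)·q2(l,m)/θ2(l,m) − 1 satisfies the discrete Volterra equation in product form; (b) if κ0(l,m) ≠ 0 for all (l,m), the function u(l,m) = p2(m,l)·( t1·q2(m,l) + t2·q1(m,l) − t1·t2 ) / ( κ0(m,l)·t1 ) − 1 satisfies the discrete Volterra equation in product form. -/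

import Mathlib

/-- The data of the Garnier system in two variables at one lattice site:
parameters `th1, th2, k0, k1, kinf` (i.e. θ₁, θ₂, κ₀, κ₁, κ∞) and variables
`p1, p2, q1, q2`. -/
structure GarnierState where
  th1 : ℂ
  th2 : ℂ
  k0 : ℂ
  k1 : ℂ
  kinf : ℂ
  p1 : ℂ
  p2 : ℂ
  q1 : ℂ
  q2 : ℂ

namespace Garnier

noncomputable def gam (x : GarnierState) : ℂ :=
  -(x.th1 + x.th2 + x.k0 + x.k1 + x.kinf - 1) / 2

def f1 (x : GarnierState) : ℂ := x.p1 * x.q1 - x.th1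

def f2 (x : GarnierState) : ℂ := x.p2 * x.q2 - x.th2

noncomputable def f3 (x : GarnierState) : ℂ := x.p1 * x.q1 + x.p2 * x.q2 + gam x

def f4 (t1 t2 : ℂ) (x : GarnierState) : ℂ :=
  x.q1 * x.q2 - (x.q1 - t1) * (x.q2 - t2)

noncomputable def f5 (t1 t2 : ℂ) (x : GarnierState) : ℂ :=
  (f3 x * f4 t1 t2 x - x.k0 * t1 * t2) *
    (f3 x * f4 t1 t2 x + x.kinf * f4 t1 t2 x - x.k0 * t1 * t2)

/-- The Bäcklund transformation `T1` of the Garnier system in two variables, as a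
step relation between states (including nonvanishing of all denominators
occurring in the step formulas). -/
noncomputable def T1Step (t1 t2 : ℂ) (x y : GarnierState) : Prop :=
  y.th1 = x.th1 + 1 ∧ y.th2 = x.th2 ∧ y.k0 = x.k0 ∧ y.k1 = 1 - x.k1 ∧
  y.kinf = x.kinf ∧
  x.q1 ≠ 0 ∧ f1 x ≠ 0 ∧ t1 * f1 x - t2 * x.p2 * x.q1 ≠ 0 ∧ y.p1 ≠ 0 ∧
  y.p1 = (x.q1 * f3 x - t1 * f1 x) * (x.q1 * f3 x - t1 * f1 x + x.kinf * x.q1) /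
    ((1 - t1) * t1 * x.q1 * f1 x) ∧
  y.p2 = t1 * (f1 x - x.p2 * x.q1) * y.p1 / (t1 * f1 x - t2 * x.p2 * x.q1) ∧
  y.q2 = (t2 * x.p2 * x.q1 - t1 * f1 x) * (t1 * x.q2 * f1 x - t2 * x.q1 * f2 x) /
    ((t1 - t2) * t1 * y.p1 * x.q1 * f1 x) ∧
  y.q1 = (x.k0 * t2 * x.q1 - f1 x * f4 t1 t2 x) / (t2 * y.p1 * x.q1)
    - t1 * y.q2 / t2 + t1

/-- The Bäcklund transformation `T2` of the Garnier system in two variables, as a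
step relation between states (including nonvanishing of all denominators
occurring in the step formulas). -/
noncomputable def T2Step (t1 t2 : ℂ) (x y : GarnierState) : Prop :=
  y.th1 = x.th1 ∧ y.th2 = x.th2 + 1 ∧ y.k0 = x.k0 ∧ y.k1 = 1 - x.k1 ∧
  y.kinf = x.kinf ∧
  x.q2 ≠ 0 ∧ f2 x ≠ 0 ∧ t2 * f2 x - t1 * x.p1 * x.q2 ≠ 0 ∧ y.p2 ≠ 0 ∧
  y.p2 = (x.q2 * f3 x - t2 * f2 x) * (x.q2 * f3 x - t2 * f2 x + x.kinf * x.q2) /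
    ((1 - t2) * t2 * x.q2 * f2 x) ∧
  y.p1 = t2 * (f2 x - x.p1 * x.q2) * y.p2 / (t2 * f2 x - t1 * x.p1 * x.q2) ∧
  y.q1 = (t1 * x.p1 * x.q2 - t2 * f2 x) * (t1 * x.q2 * f1 x - t2 * x.q1 * f2 x) /
    ((t1 - t2) * t2 * y.p2 * x.q2 * f2 x) ∧
  y.q2 = (x.k0 * t1 * x.q2 - f2 x * f4 t1 t2 x) / (t1 * y.p2 * x.q2)
    - t2 * y.q1 / t1 + t2

/-- The Bäcklund transformation `T3` of the Garnier system in two variables, as a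
step relation between states (including nonvanishing of all denominators
occurring in the step formulas). -/
noncomputable def T3Step (t1 t2 : ℂ) (x y : GarnierState) : Prop :=
  y.th1 = x.th1 ∧ y.th2 = x.th2 ∧ y.k0 = x.k0 + 1 ∧ y.k1 = 1 - x.k1 ∧
  y.kinf = x.kinf ∧
  f4 t1 t2 x ≠ 0 ∧ x.k0 * t2 - x.p1 * f4 t1 t2 x ≠ 0 ∧
  x.k0 * t1 - x.p2 * f4 t1 t2 x ≠ 0 ∧ f5 t1 t2 x ≠ 0 ∧
  y.p1 = f5 t1 t2 x / (t1 * (x.k0 * t2 - x.p1 * f4 t1 t2 x) * f4 t1 t2 x) ∧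
  y.p2 = f5 t1 t2 x / (t2 * (x.k0 * t1 - x.p2 * f4 t1 t2 x) * f4 t1 t2 x) ∧
  y.q1 = t1 * (x.k0 * t2 - x.p1 * f4 t1 t2 x) * (x.k0 * t2 * x.q1 - f1 x * f4 t1 t2 x) /
    f5 t1 t2 x ∧
  y.q2 = t2 * (x.k0 * t1 - x.p2 * f4 t1 t2 x) * (x.k0 * t1 * x.q2 - f2 x * f4 t1 t2 x) /
    f5 t1 t2 x

end Garnier


section Helpers

open Garnier

/-- Under a `T2` step, `p2' * f4' * q2 = k0*t1*q2 - f2*f4`. -/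
lemma T2_key {t1 t2 : ℂ} (ht1 : t1 ≠ 0) {x y : GarnierState}
    (h : Garnier.T2Step t1 t2 x y) :
    y.p2 * Garnier.f4 t1 t2 y * x.q2
      = x.k0 * t1 * x.q2 - Garnier.f2 x * Garnier.f4 t1 t2 x := by
  obtain ⟨-, -, -, -, -, hq2, hf2, -, hp2, -, -, -, hq2'⟩ := h
  have hf4y : Garnier.f4 t1 t2 y = t2 * y.q1 + t1 * y.q2 - t1 * t2 := by
    simp only [Garnier.f4]; ring
  rw [hf4y, hq2']
  field_simp
  ring

/-- Under a `T3` step, `p2' * q2' * f4 = k0*t1*q2 - f2*f4`. -/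
lemma T3_key1 {t1 t2 : ℂ} (ht2 : t2 ≠ 0) {x y : GarnierState}
    (h : Garnier.T3Step t1 t2 x y) :
    y.p2 * y.q2 * Garnier.f4 t1 t2 x
      = x.k0 * t1 * x.q2 - Garnier.f2 x * Garnier.f4 t1 t2 x := by
  obtain ⟨-, -, -, -, -, hf4, -, hZ, hf5, -, hp2, -, hq2⟩ := h
  rw [hp2, hq2]
  field_simp

/-- Under a `T3` step, `f2' * f4 = q2 * (k0*t1 - p2*f4)`. -/
lemma T3_key2 {t1 t2 : ℂ} (ht2 : t2 ≠ 0) {x y : GarnierState}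
    (h : Garnier.T3Step t1 t2 x y) :
    Garnier.f2 y * Garnier.f4 t1 t2 x
      = x.q2 * (x.k0 * t1 - x.p2 * Garnier.f4 t1 t2 x) := by
  have h1 := T3_key1 ht2 h
  have hth : y.th2 = x.th2 := h.2.1
  simp only [Garnier.f2] at h1 ⊢
  rw [hth]
  linear_combination h1

end Helpers

/-- Special solutions of the discrete Volterra equation (product form) from a
(T2,T3) Garnier lattice. -/
theorem dVolterra_solutions_from_Garnier_T2T3_lattice
    (t1 t2 : ℂ) (ht10 : t1 ≠ 0) (ht11 : t1 ≠ 1) (ht20 : t2 ≠ 0) (ht21 : t2 ≠ 1)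
    (ht12 : t1 ≠ t2)
    (x : ℤ → ℤ → GarnierState)
    (hT2 : ∀ l m : ℤ, Garnier.T2Step t1 t2 (x l m) (x (l+1) m))
    (hT3 : ∀ l m : ℤ, Garnier.T3Step t1 t2 (x l m) (x l (m+1))) :
    ((∀ l m : ℤ, (x l m).th2 ≠ 0) →
      ∀ u : ℤ → ℤ → ℂ,
        (∀ l m : ℤ, u l m = (x l m).p2 * (x l m).q2 / (x l m).th2 - 1) →
        ∀ l m : ℤ, u (l+1) (m+1) * (1 + u l (m+1)) = u l m * (1 + u (l+1) m)) ∧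
    ((∀ l m : ℤ, (x l m).k0 ≠ 0) →
      ∀ u : ℤ → ℤ → ℂ,
        (∀ l m : ℤ, u l m =
          (x m l).p2 * (t1 * (x m l).q2 + t2 * (x m l).q1 - t1 * t2) /
            ((x m l).k0 * t1) - 1) →
        ∀ l m : ℤ, u (l+1) (m+1) * (1 + u l (m+1)) = u l m * (1 + u (l+1) m)) := by
  constructor
  · intro hth u hu l m
    have hA2 := hT2 l m
    have hA3 := hT3 l m
    have hB3 := hT3 (l+1) m
    have hC2 := hT2 l (m+1)
    have e1 := T2_key ht10 hA2
    have e2 := T3_key1 ht20 hA3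
    have e3 := T3_key2 ht20 hB3
    have hq2A : (x l m).q2 ≠ 0 := hA2.2.2.2.2.2.1
    have hf4A : Garnier.f4 t1 t2 (x l m) ≠ 0 := hA3.2.2.2.2.2.1
    have hf4B : Garnier.f4 t1 t2 (x (l+1) m) ≠ 0 := hB3.2.2.2.2.2.1
    have hk0B : (x (l+1) m).k0 = (x l m).k0 := hA2.2.2.1
    rw [hk0B] at e3
    have hthB : (x (l+1) m).th2 = (x l m).th2 + 1 := hA2.2.1
    have hthC : (x l (m+1)).th2 = (x l m).th2 := hA3.2.1
    have hthD : (x (l+1) (m+1)).th2 = (x l (m+1)).th2 + 1 := hC2.2.1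
    have key : Garnier.f2 (x (l+1) (m+1)) * ((x l (m+1)).p2 * (x l (m+1)).q2)
        = Garnier.f2 (x l m) * ((x (l+1) m).p2 * (x (l+1) m).q2) := by
      have hne : Garnier.f4 t1 t2 (x l m) * Garnier.f4 t1 t2 (x (l+1) m) * (x l m).q2 ≠ 0 :=
        mul_ne_zero (mul_ne_zero hf4A hf4B) hq2A
      refine mul_right_cancel₀ hne ?_
      linear_combination
        ((x l (m+1)).p2 * (x l (m+1)).q2 * Garnier.f4 t1 t2 (x l m) * (x l m).q2) * e3
        + ((x (l+1) m).q2 * (x l m).q2 *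
            ((x l m).k0 * t1 - (x (l+1) m).p2 * Garnier.f4 t1 t2 (x (l+1) m))) * e2
        - ((x (l+1) m).q2 * (x l m).q2 * (x l m).k0 * t1) * e1
    have hthA : (x l m).th2 ≠ 0 := hth l m
    have hthA1 : (x l m).th2 + 1 ≠ 0 := by rw [← hthB]; exact hth (l+1) m
    rw [hu, hu, hu, hu, hthD, hthC, hthB]
    simp only [Garnier.f2] at key
    rw [hthD, hthC] at key
    field_simp
    linear_combination key
  · intro hk0 u hu l m
    have hA2 := hT2 m l
    have hA3 := hT3 m l
    have hB2 := hT2 m (l+1)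
    have hC3 := hT3 (m+1) l
    have e1 := T2_key ht10 hA2
    have e2 := T2_key ht10 hB2
    have e3 := T3_key1 ht20 hA3
    have e4 := T3_key2 ht20 hA3
    have hq2A : (x m l).q2 ≠ 0 := hA2.2.2.2.2.2.1
    have hq2B : (x m (l+1)).q2 ≠ 0 := hB2.2.2.2.2.2.1
    have hf4A : Garnier.f4 t1 t2 (x m l) ≠ 0 := hA3.2.2.2.2.2.1
    have hkB : (x m (l+1)).k0 = (x m l).k0 + 1 := hA3.2.2.1
    have hkC : (x (m+1) l).k0 = (x m l).k0 := hA2.2.2.1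
    have hkD : (x (m+1) (l+1)).k0 = (x (m+1) l).k0 + 1 := hC3.2.2.1
    rw [hkB] at e2
    have key : ((x (m+1) (l+1)).p2 * Garnier.f4 t1 t2 (x (m+1) (l+1))
          - ((x m l).k0 + 1) * t1) * ((x (m+1) l).p2 * Garnier.f4 t1 t2 (x (m+1) l))
        = ((x m l).p2 * Garnier.f4 t1 t2 (x m l) - (x m l).k0 * t1)
          * ((x m (l+1)).p2 * Garnier.f4 t1 t2 (x m (l+1))) := by
      have hne : (x m (l+1)).q2 * Garnier.f4 t1 t2 (x m l) * (x m l).q2 ≠ 0 :=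
        mul_ne_zero (mul_ne_zero hq2B hf4A) hq2A
      refine mul_right_cancel₀ hne ?_
      linear_combination
        ((x (m+1) l).p2 * Garnier.f4 t1 t2 (x (m+1) l) * Garnier.f4 t1 t2 (x m l)
            * (x m l).q2) * e2
        + (- Garnier.f4 t1 t2 (x m (l+1))
            * ((x m l).p2 * Garnier.f4 t1 t2 (x m l) - (x m l).k0 * t1) * (x m l).q2) * e3
        + (- Garnier.f4 t1 t2 (x m (l+1))
            * ((x (m+1) l).p2 * Garnier.f4 t1 t2 (x (m+1) l)) * (x m l).q2) * e4
        + (Garnier.f4 t1 t2 (x m (l+1))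
            * ((x m l).p2 * Garnier.f4 t1 t2 (x m l) - (x m l).k0 * t1) * (x m l).q2) * e1
    have hkA0 : (x m l).k0 ≠ 0 := hk0 m l
    have hkA1 : (x m l).k0 + 1 ≠ 0 := by rw [← hkB]; exact hk0 m (l+1)
    rw [hu, hu, hu, hu, hkD, hkC, hkB]
    simp only [Garnier.f4] at key
    field_simp
    linear_combination key
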